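/- arXiv:2503.21619 — 2 statements merged into one kernel-verified Lean document; each statement's English description precedes it below -/
import Mathlib

section
/- The group F₂ × F₂ × F₂ (direct product of three free groups of rank 2) is not purely permutation field: there is no sequence of homomorphisms φ_i : F₂×F₂×F₂ → S_{n_i} with n_i such that std∘φ_i strongly converges to the left regular representation. -/
noncomputable section
open scoped ENNReal

variable {α β : Type*} {E : Type*} [NormedAddCommGroup E] {p : ℝ≥0∞}

theorem Memℓp.comp_equiv {f : β → E} (hf : Memℓp f p) (e : α ≃ β) :
    Memℓp (f ∘ e) p := by
  rcases p.trichotomy with (rfl | rfl | hp)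
  · exact memℓp_zero ((memℓp_zero_iff.1 hf).preimage (e.injective.injOn))
  · obtain ⟨C, hC⟩ := memℓp_infty_iff.1 hf
    refine memℓp_infty ⟨C, ?_⟩
    rintro x ⟨a, rfl⟩
    exact hC ⟨e a, rfl⟩
  · refine memℓp_gen ?_
    exact (e.summable_iff (f := fun i => ‖f i‖ ^ p.toReal)).2
      ((memℓp_gen_iff (by positivity)).1 hf)

/-- ℓ²(α) with complex coefficients. -/
abbrev ellTwo (α : Type*) := lp (fun _ : α => ℂ) 2

/-- transport of ℓ² under an equiv of index types -/
def ellTwoCongr (e : α ≃ β) : ellTwo α ≃ₗᵢ[ℂ] ellTwo β where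
  toFun f := ⟨(f : α → ℂ) ∘ e.symm, (lp.memℓp f).comp_equiv e.symm⟩
  invFun f := ⟨(f : β → ℂ) ∘ e, (lp.memℓp f).comp_equiv e⟩
  left_inv f := by ext x; simp
  right_inv f := by ext x; simp
  map_add' f g := by ext x; simp [lp.coeFn_add]; rfl
  map_smul' c f := by ext x; simp [lp.coeFn_smul]
  norm_map' f := by
    rw [lp.norm_eq_tsum_rpow (by norm_num) , lp.norm_eq_tsum_rpow (by norm_num)]
    congr 1
    exact e.symm.tsum_eq (fun a => ‖(f : α → ℂ) a‖ ^ (2 : ℝ≥0∞).toReal)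

end

noncomputable section
@[simp] theorem ellTwoCongr_apply (e : α ≃ β) (f : ellTwo α) (x : β) :
    (ellTwoCongr e f : β → ℂ) x = (f : α → ℂ) (e.symm x) := rfl

/-- The left regular representation of a group on ℓ²(G), as a monoid hom to bounded operators. -/
def leftRegularRep (G : Type*) [Group G] : G →* (ellTwo G →L[ℂ] ellTwo G) where
  toFun g := ((ellTwoCongr (Equiv.mulLeft g)).toContinuousLinearEquiv :
      ellTwo G →L[ℂ] ellTwo G)
  map_one' := by
    ext f x
    simp [Equiv.Perm.one_symm]
  map_mul' a b := by
    ext f x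
    simp [Equiv.Perm.mul_def, mul_assoc]

/-- The extension of the left regular representation to the group algebra ℂ[G]. -/
def leftRegularAlg (G : Type*) [Group G] :
    MonoidAlgebra ℂ G →ₐ[ℂ] (ellTwo G →L[ℂ] ellTwo G) :=
  MonoidAlgebra.lift ℂ _ G (leftRegularRep G)
end

noncomputable section

/-- The `n`-dimensional permutation (defining) representation of `S_n` on `ℂⁿ`,
as a homomorphism to bounded operators on Euclidean space. -/
def permRepCLM (n : ℕ) :
    Equiv.Perm (Fin n) →* (EuclideanSpace ℂ (Fin n) →L[ℂ] EuclideanSpace ℂ (Fin n)) where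
  toFun σ := ((LinearIsometryEquiv.piLpCongrLeft 2 ℂ ℂ σ).toContinuousLinearEquiv :
      EuclideanSpace ℂ (Fin n) →L[ℂ] EuclideanSpace ℂ (Fin n))
  map_one' := by
    ext v x
    simp [LinearIsometryEquiv.piLpCongrLeft_apply, Equiv.piCongrLeft', Equiv.Perm.one_symm]
  map_mul' σ τ := by
    ext v x
    simp [LinearIsometryEquiv.piLpCongrLeft_apply, Equiv.piCongrLeft', Equiv.Perm.mul_def]

end

noncomputable section
open Filter

/-- The mean-zero subspace of `ℂⁿ`: the orthogonal complement of constants, carrying the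
`(n-1)`-dimensional standard representation of `S_n`. -/
def meanZero (n : ℕ) : Submodule ℂ (EuclideanSpace ℂ (Fin n)) where
  carrier := {v | ∑ i, v i = 0}
  add_mem' := by
    intro a b ha hb
    simp only [Set.mem_setOf_eq, PiLp.add_apply, Finset.sum_add_distrib] at *
    rw [ha, hb, add_zero]
  zero_mem' := by simp
  smul_mem' := by
    intro c v hv
    simp only [Set.mem_setOf_eq, PiLp.smul_apply, ← Finset.mul_sum, smul_eq_mul] at *
    rw [hv, mul_zero]

/-- The extension to the group algebra `ℂ[Γ]` of the representation `std ∘ φ`, where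
`φ : Γ → S_n` and `std` is the standard `(n-1)`-dimensional subrepresentation of the defining
representation of `S_n` (realized on the invariant subspace `meanZero n` by compressing). -/
def stdAlg {Γ : Type*} [Group Γ] (n : ℕ) (φ : Γ →* Equiv.Perm (Fin n))
    (z : MonoidAlgebra ℂ Γ) : meanZero n →L[ℂ] meanZero n :=
  (meanZero n).orthogonalProjectionOnto.comp
    ((MonoidAlgebra.lift ℂ _ Γ ((permRepCLM n).comp φ) z).comp (meanZero n).subtypeL)

/-- The free group on two generators. -/
abbrev F₂ := FreeGroup (Fin 2)


/-! ### Part I: ping-pong operator norm bound on ℓ² -/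

open scoped ENNReal ComplexConjugate

namespace PPF

variable {G : Type*} [Group G]

lemma leftRegularRep_apply (g : G) (f : ellTwo G) (x : G) :
    (leftRegularRep G g f : G → ℂ) x = (f : G → ℂ) (g⁻¹ * x) := rfl

lemma norm_leftRegularRep_apply (g : G) (f : ellTwo G) :
    ‖leftRegularRep G g f‖ = ‖f‖ :=
  (ellTwoCongr (Equiv.mulLeft g)).norm_map f

lemma memℓp_two_of_le {f : G → ℂ} (h : ellTwo G)
    (hle : ∀ x, ‖f x‖ ≤ ‖(h : G → ℂ) x‖) : Memℓp f 2 := by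
  have h2 : (0:ℝ) < (2:ℝ≥0∞).toReal := by norm_num
  refine memℓp_gen ?_
  refine Summable.of_nonneg_of_le (fun x => by positivity) (fun x => ?_)
    ((lp.memℓp h).summable h2)
  exact Real.rpow_le_rpow (norm_nonneg _) (hle x) h2.le

/-- restriction of an ℓ² function to a subset -/
def indL2 (S : Set G) (f : ellTwo G) : ellTwo G :=
  ⟨S.indicator f, memℓp_two_of_le f (fun x => norm_indicator_le_norm_self _ _)⟩

lemma indL2_apply (S : Set G) (f : ellTwo G) (x : G) :
    (indL2 S f : G → ℂ) x = S.indicator (f : G → ℂ) x := rfl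

lemma norm_sq_eq (f : ellTwo G) : ‖f‖ ^ 2 = ∑' x, ‖(f : G → ℂ) x‖ ^ 2 := by
  have := lp.norm_rpow_eq_tsum (p := 2) (by norm_num) f
  rw [show ((2:ℝ≥0∞).toReal) = (2:ℝ) by norm_num] at this
  rw [← Real.rpow_natCast ‖f‖ 2]
  rw [show ((2:ℕ):ℝ) = (2:ℝ) by norm_num, this]
  exact tsum_congr fun x => by rw [← Real.rpow_natCast _ 2]; norm_num

lemma summable_norm_sq (f : ellTwo G) : Summable fun x => ‖(f : G → ℂ) x‖ ^ 2 := by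
  have h2 : (0:ℝ) < (2:ℝ≥0∞).toReal := by norm_num
  have := (lp.memℓp f).summable h2
  refine this.congr fun x => ?_
  rw [show ((2:ℝ≥0∞).toReal) = (2:ℝ) by norm_num, ← Real.rpow_natCast _ 2]
  norm_num

lemma le_of_sq_le_sq {a b : ℝ} (hb : 0 ≤ b) (h : a ^ 2 ≤ b ^ 2) (ha : 0 ≤ a) : a ≤ b := by
  nlinarith

lemma norm_indL2_le (S : Set G) (f : ellTwo G) : ‖indL2 S f‖ ≤ ‖f‖ := by
  refine le_of_sq_le_sq (norm_nonneg _) ?_ (norm_nonneg _)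
  rw [norm_sq_eq, norm_sq_eq]
  refine Summable.tsum_le_tsum (fun x => ?_) (summable_norm_sq _) (summable_norm_sq f)
  have := norm_indicator_le_norm_self (s := S) (f := (f : G → ℂ)) (a := x)
  rw [indL2_apply]
  exact pow_le_pow_left₀ (norm_nonneg _) this 2

lemma sum_norm_indL2_le {m : ℕ} (S : Fin m → Set G)
    (hS : ∀ i j, i ≠ j → ∀ x, x ∈ S i → x ∉ S j) (f : ellTwo G) :
    ∑ i, ‖indL2 (S i) f‖ ≤ Real.sqrt m * ‖f‖ := by
  classical
  have key : ∑ i, ‖indL2 (S i) f‖ ^ 2 ≤ ‖f‖ ^ 2 := by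
    have e1 : ∀ i : Fin m, ‖indL2 (S i) f‖ ^ 2 = ∑' x, ‖(indL2 (S i) f : G → ℂ) x‖ ^ 2 :=
      fun i => norm_sq_eq _
    rw [Finset.sum_congr rfl (fun i _ => e1 i), ← Summable.tsum_finsetSum
      (fun i _ => summable_norm_sq (indL2 (S i) f))]
    rw [norm_sq_eq]
    refine Summable.tsum_le_tsum (fun x => ?_) ?_ (summable_norm_sq f)
    · by_cases hx : ∃ i, x ∈ S i
      · obtain ⟨i₀, hi₀⟩ := hx
        rw [Finset.sum_eq_single i₀]
        · rw [indL2_apply, Set.indicator_of_mem hi₀]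
        · intro j _ hj
          rw [indL2_apply, Set.indicator_of_notMem (hS i₀ j (Ne.symm hj) x hi₀)]
          simp
        · intro h; exact absurd (Finset.mem_univ i₀) h
      · push_neg at hx
        rw [Finset.sum_congr rfl (fun j _ => by
          rw [indL2_apply, Set.indicator_of_notMem (hx j)])]
        simp
    · exact summable_sum (fun i _ => summable_norm_sq (indL2 (S i) f))
  have hsq : (∑ i, ‖indL2 (S i) f‖) ^ 2 ≤ (m : ℝ) * ‖f‖ ^ 2 := by
    calc (∑ i, ‖indL2 (S i) f‖) ^ 2 ≤ (Finset.univ.card : ℝ) * ∑ i, ‖indL2 (S i) f‖ ^ 2 :=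
          sq_sum_le_card_mul_sum_sq
      _ ≤ (m : ℝ) * ‖f‖ ^ 2 := by
          rw [Finset.card_univ, Fintype.card_fin]
          exact mul_le_mul_of_nonneg_left key (by positivity)
  refine le_of_sq_le_sq (by positivity) ?_ (Finset.sum_nonneg fun i _ => norm_nonneg _)
  rw [mul_pow, Real.sq_sqrt (by positivity)]
  exact hsq

end PPF

namespace PPF

variable {G : Type*} [Group G]

local notation "⟪" x ", " y "⟫" => @inner ℂ _ _ x y

lemma inner_translate_bound (tt : G) (Aa Bb : Set G) (hAB : ∀ u, u ∉ Bb → tt * u ∈ Aa)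
    (f g : ellTwo G) :
    ‖(⟪g, leftRegularRep G tt f⟫ : ℂ)‖ ≤ ‖indL2 Bb f‖ * ‖g‖ + ‖f‖ * ‖indL2 Aa g‖ := by
  classical
  set g' : ellTwo G := leftRegularRep G tt⁻¹ g with hg'
  set g'A : ellTwo G := leftRegularRep G tt⁻¹ (indL2 Aa g) with hg'A
  have hg'_apply : ∀ u, (g' : G → ℂ) u = (g : G → ℂ) (tt * u) := by
    intro u; rw [hg', leftRegularRep_apply]; rw [inv_inv]
  have hg'A_apply : ∀ u, (g'A : G → ℂ) u = Aa.indicator (g : G → ℂ) (tt * u) := by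
    intro u; rw [hg'A, leftRegularRep_apply, inv_inv, indL2_apply]
  have key : (⟪g, leftRegularRep G tt f⟫ : ℂ)
      = ⟪g', indL2 Bb f⟫ + ⟪g'A, indL2 Bbᶜ f⟫ := by
    rw [lp.inner_eq_tsum, lp.inner_eq_tsum, lp.inner_eq_tsum]
    rw [← Summable.tsum_add (lp.summable_inner g' (indL2 Bb f)) (lp.summable_inner g'A (indL2 Bbᶜ f))]
    have := (Equiv.mulLeft tt).tsum_eq
      (fun x => (⟪(g : G → ℂ) x, (leftRegularRep G tt f : G → ℂ) x⟫ : ℂ))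
    rw [← this]
    refine tsum_congr fun u => ?_
    simp only [Equiv.coe_mulLeft]
    rw [leftRegularRep_apply, inv_mul_cancel_left]
    rw [hg'_apply, hg'A_apply, indL2_apply, indL2_apply]
    by_cases hu : u ∈ Bb
    · rw [Set.indicator_of_mem hu,
        Set.indicator_of_notMem (show u ∉ Bbᶜ from fun h => h hu)]
      simp [RCLike.inner_apply]
    · rw [Set.indicator_of_notMem hu,
        Set.indicator_of_mem (show u ∈ Bbᶜ from hu),
        Set.indicator_of_mem (hAB u hu)]
      simp [RCLike.inner_apply]
  rw [key]
  calc ‖(⟪g', indL2 Bb f⟫ : ℂ) + ⟪g'A, indL2 Bbᶜ f⟫‖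
      ≤ ‖(⟪g', indL2 Bb f⟫ : ℂ)‖ + ‖(⟪g'A, indL2 Bbᶜ f⟫ : ℂ)‖ := norm_add_le _ _
    _ ≤ ‖g'‖ * ‖indL2 Bb f‖ + ‖g'A‖ * ‖indL2 Bbᶜ f‖ := by
        gcongr <;> exact norm_inner_le_norm _ _
    _ ≤ ‖indL2 Bb f‖ * ‖g‖ + ‖f‖ * ‖indL2 Aa g‖ := by
        rw [hg', hg'A, norm_leftRegularRep_apply, norm_leftRegularRep_apply]
        have h1 := norm_indL2_le Bbᶜ f
        nlinarith [norm_nonneg g, norm_nonneg (indL2 Bb f), norm_nonneg (indL2 Aa g)]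

lemma pingpong_opNorm_le (m : ℕ) (t : Fin m → G) (A B : Fin m → Set G)
    (hA : ∀ i j, i ≠ j → ∀ x, x ∈ A i → x ∉ A j)
    (hB : ∀ i j, i ≠ j → ∀ x, x ∈ B i → x ∉ B j)
    (hAB : ∀ i (u : G), u ∉ B i → t i * u ∈ A i) :
    ‖∑ i, (leftRegularRep G (t i) : ellTwo G →L[ℂ] ellTwo G)‖ ≤ 2 * Real.sqrt m := by
  have hsqrt : (0:ℝ) ≤ Real.sqrt m := Real.sqrt_nonneg _
  refine ContinuousLinearMap.opNorm_le_bound _ (by positivity) fun f => ?_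
  set g : ellTwo G := (∑ i, (leftRegularRep G (t i) : ellTwo G →L[ℂ] ellTwo G)) f with hgdef
  show ‖g‖ ≤ 2 * Real.sqrt m * ‖f‖
  have hkey : ‖g‖ ^ 2 ≤ 2 * Real.sqrt m * ‖f‖ * ‖g‖ := by
    have h1 : ‖g‖ ^ 2 = RCLike.re (⟪g, g⟫ : ℂ) := norm_sq_eq_re_inner (𝕜 := ℂ) g
    have h2 : (⟪g, g⟫ : ℂ) = ∑ i, ⟪g, leftRegularRep G (t i) f⟫ := by
      rw [hgdef]
      rw [ContinuousLinearMap.sum_apply]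
      exact inner_sum Finset.univ _ _
    calc ‖g‖ ^ 2 = RCLike.re (⟪g, g⟫ : ℂ) := h1
      _ ≤ ‖(⟪g, g⟫ : ℂ)‖ := RCLike.re_le_norm _
      _ = ‖∑ i, (⟪g, leftRegularRep G (t i) f⟫ : ℂ)‖ := by rw [h2]
      _ ≤ ∑ i, ‖(⟪g, leftRegularRep G (t i) f⟫ : ℂ)‖ := norm_sum_le _ _
      _ ≤ ∑ i, (‖indL2 (B i) f‖ * ‖g‖ + ‖f‖ * ‖indL2 (A i) g‖) := by
          refine Finset.sum_le_sum fun i _ => ?_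
          exact inner_translate_bound (t i) (A i) (B i) (hAB i) f g
      _ = (∑ i, ‖indL2 (B i) f‖) * ‖g‖ + ‖f‖ * ∑ i, ‖indL2 (A i) g‖ := by
          rw [Finset.sum_add_distrib, Finset.sum_mul, Finset.mul_sum]
      _ ≤ (Real.sqrt m * ‖f‖) * ‖g‖ + ‖f‖ * (Real.sqrt m * ‖g‖) := by
          have hBf := sum_norm_indL2_le B hB f
          have hAg := sum_norm_indL2_le A hA g
          nlinarith [norm_nonneg f, norm_nonneg g,
            Finset.sum_nonneg (fun (i : Fin m) (_ : i ∈ Finset.univ) =>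
              norm_nonneg (indL2 (A i) g)),
            Finset.sum_nonneg (fun (i : Fin m) (_ : i ∈ Finset.univ) =>
              norm_nonneg (indL2 (B i) f))]
      _ = 2 * Real.sqrt m * ‖f‖ * ‖g‖ := by ring
  rcases eq_or_lt_of_le (norm_nonneg g) with h0 | h0
  · rw [← h0]; positivity
  · nlinarith

end PPF

/-! ### Part II: concrete ping-pong data coming from a linear action of `F₂` on `ℝ²` -/

namespace PPF

/-- the linear map `(x, y) ↦ (x + 2y, y)` -/
def aL : (ℝ × ℝ) →ₗ[ℝ] (ℝ × ℝ) where
  toFun v := (v.1 + 2 * v.2, v.2)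
  map_add' u v := by simp [Prod.ext_iff]; ring
  map_smul' c v := by simp [Prod.ext_iff]; ring

def aL' : (ℝ × ℝ) →ₗ[ℝ] (ℝ × ℝ) where
  toFun v := (v.1 - 2 * v.2, v.2)
  map_add' u v := by simp [Prod.ext_iff]; ring
  map_smul' c v := by simp [Prod.ext_iff]; ring

def bL : (ℝ × ℝ) →ₗ[ℝ] (ℝ × ℝ) where
  toFun v := (v.1, 2 * v.1 + v.2)
  map_add' u v := by simp [Prod.ext_iff]; ring
  map_smul' c v := by simp [Prod.ext_iff]; ring

def bL' : (ℝ × ℝ) →ₗ[ℝ] (ℝ × ℝ) where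
  toFun v := (v.1, v.2 - 2 * v.1)
  map_add' u v := by simp [Prod.ext_iff]; ring
  map_smul' c v := by simp [Prod.ext_iff]; ring

def aE : (ℝ × ℝ) ≃ₗ[ℝ] (ℝ × ℝ) :=
  LinearEquiv.ofLinear aL aL' (by ext v <;> simp [aL, aL'] <;> ring)
    (by ext v <;> simp [aL, aL'] <;> ring)

def bE : (ℝ × ℝ) ≃ₗ[ℝ] (ℝ × ℝ) :=
  LinearEquiv.ofLinear bL bL' (by ext v <;> simp [bL, bL'] <;> ring)
    (by ext v <;> simp [bL, bL'] <;> ring)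

lemma aE_apply (v : ℝ × ℝ) : aE v = (v.1 + 2 * v.2, v.2) := rfl
lemma bE_apply (v : ℝ × ℝ) : bE v = (v.1, 2 * v.1 + v.2) := rfl

lemma linEquiv_mul_apply (f g : (ℝ × ℝ) ≃ₗ[ℝ] (ℝ × ℝ)) (v : ℝ × ℝ) :
    (f * g) v = f (g v) := rfl

lemma aE_pow_apply (k : ℕ) : ∀ v : ℝ × ℝ, (aE ^ k) v = (v.1 + 2 * k * v.2, v.2) := by
  induction k with
  | zero => intro v; simp [Prod.ext_iff]
  | succ k ih =>
    intro v
    rw [pow_succ, linEquiv_mul_apply, ih (aE v), aE_apply]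
    simp only [Prod.ext_iff]
    refine ⟨by push_cast; ring, by trivial⟩

lemma aE_pow_inv_apply (k : ℕ) (v : ℝ × ℝ) :
    ((aE ^ k)⁻¹) v = (v.1 - 2 * k * v.2, v.2) := by
  have : (aE ^ k) ((v.1 - 2 * k * v.2, v.2) : ℝ × ℝ) = v := by
    rw [aE_pow_apply]
    simp [Prod.ext_iff]
  calc ((aE ^ k)⁻¹) v = ((aE ^ k)⁻¹) ((aE ^ k) ((v.1 - 2 * k * v.2, v.2) : ℝ × ℝ)) := by
        rw [this]
    _ = (v.1 - 2 * k * v.2, v.2) := by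
        rw [← linEquiv_mul_apply, inv_mul_cancel]
        rfl

/-- the generators of `F₂` -/
def xg : F₂ := FreeGroup.of 0
def yg : F₂ := FreeGroup.of 1

/-- the homomorphism `F₂ → GL₂(ℝ)` sending the generators to `aE`, `bE` -/
def ρ : F₂ →* ((ℝ × ℝ) ≃ₗ[ℝ] (ℝ × ℝ)) := FreeGroup.lift ![aE, bE]

lemma ρ_x : ρ xg = aE := by simp [ρ, xg]
lemma ρ_y : ρ yg = bE := by simp [ρ, yg]

/-- the five ping-pong elements of `F₂` -/
def tF (i : Fin 5) : F₂ := xg ^ (2 * (i.1 + 1)) * yg * (xg ^ (2 * (i.1 + 1)))⁻¹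

/-- the commutator of the generators -/
def cF : F₂ := xg * yg * xg⁻¹ * yg⁻¹

lemma cF_ne_one : cF ≠ 1 := by
  intro h
  have h2 : ρ cF = 1 := by rw [h, map_one]
  have h3 : (ρ cF) ((1 : ℝ), (0 : ℝ)) = ((1 : ℝ), (0 : ℝ)) := by rw [h2]; rfl
  rw [cF] at h3
  rw [map_mul, map_mul, map_mul, map_inv, map_inv, ρ_x, ρ_y] at h3
  rw [linEquiv_mul_apply, linEquiv_mul_apply, linEquiv_mul_apply] at h3
  have hbinv : (bE⁻¹) ((1 : ℝ), (0 : ℝ)) = ((1 : ℝ), (-2 : ℝ)) := by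
    have : bE ((1 : ℝ), (-2 : ℝ)) = ((1 : ℝ), (0 : ℝ)) := by
      rw [bE_apply]; norm_num
    calc (bE⁻¹) ((1 : ℝ), (0 : ℝ)) = (bE⁻¹) (bE ((1 : ℝ), (-2 : ℝ))) := by rw [this]
      _ = ((1 : ℝ), (-2 : ℝ)) := by rw [← linEquiv_mul_apply, inv_mul_cancel]; rfl
  have hainv : (aE⁻¹) ((1 : ℝ), (-2 : ℝ)) = ((5 : ℝ), (-2 : ℝ)) := by
    have h5 := aE_pow_inv_apply 1 ((1 : ℝ), (-2 : ℝ))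
    rw [pow_one] at h5
    rw [h5]; norm_num
  rw [hbinv, hainv, bE_apply] at h3
  norm_num [aE_apply, Prod.ext_iff] at h3

section Gamma

variable {G : Type*} [Group G] (π : G →* F₂)

/-- first-coordinate vector of the orbit map -/
def rvec (g : G) : ℝ × ℝ := (ρ (π g)) ((1 : ℝ), (0 : ℝ))

lemma rvec_ne_zero (g : G) : ¬((rvec π g).1 = 0 ∧ (rvec π g).2 = 0) := by
  intro h
  have h0 : rvec π g = 0 := by
    rw [Prod.ext_iff]; exact ⟨h.1, h.2⟩
  have := (LinearEquiv.map_eq_zero_iff (ρ (π g))).mp h0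
  rw [Prod.ext_iff] at this
  norm_num at this

/-- center of the `i`-th interval -/
def cc (i : Fin 5) : ℝ := 4 * (i.1 + 1)

/-- the five "open" target sets -/
def AΓ (i : Fin 5) : Set G :=
  {g | |(rvec π g).1 - cc i * (rvec π g).2| < |(rvec π g).2|}

/-- the five "closed" source sets -/
def BΓ (i : Fin 5) : Set G :=
  {g | |(rvec π g).1 - cc i * (rvec π g).2| ≤ |(rvec π g).2|}

lemma cc_dist {i j : Fin 5} (h : i ≠ j) : 4 ≤ |cc i - cc j| := by
  have hij : i.1 ≠ j.1 := fun hh => h (Fin.ext hh)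
  rcases Nat.lt_or_ge i.1 j.1 with hlt | hge
  · have : (i.1 : ℝ) + 1 ≤ (j.1 : ℝ) := by exact_mod_cast hlt
    rw [cc, cc, abs_sub_comm, abs_of_nonneg (by linarith)]
    linarith
  · have hlt : j.1 < i.1 := lt_of_le_of_ne hge (Ne.symm hij)
    have : (j.1 : ℝ) + 1 ≤ (i.1 : ℝ) := by exact_mod_cast hlt
    rw [cc, cc, abs_of_nonneg (by linarith)]
    linarith

lemma BΓ_disjoint : ∀ i j, i ≠ j → ∀ g : G, g ∈ BΓ π i → g ∉ BΓ π j := by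
  intro i j hij g hi hj
  rw [BΓ, Set.mem_setOf_eq] at hi hj
  set v1 := (rvec π g).1
  set v2 := (rvec π g).2
  have h4 : 4 ≤ |cc i - cc j| := cc_dist hij
  have habs : |(cc i - cc j) * v2| ≤ 2 * |v2| := by
    have : (cc i - cc j) * v2 = (v1 - cc j * v2) - (v1 - cc i * v2) := by ring
    rw [this]
    calc |(v1 - cc j * v2) - (v1 - cc i * v2)|
        ≤ |v1 - cc j * v2| + |v1 - cc i * v2| := abs_sub _ _
      _ ≤ 2 * |v2| := by linarith
  rw [abs_mul] at habs
  have hv2 : |v2| = 0 := by nlinarith [abs_nonneg v2]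
  have hv2' : v2 = 0 := abs_eq_zero.mp hv2
  have hv1 : v1 = 0 := by
    rw [hv2', mul_zero, sub_zero] at hi
    simpa using hi
  exact rvec_ne_zero π g ⟨hv1, hv2'⟩

lemma AΓ_subset_BΓ (i : Fin 5) : (AΓ π i : Set G) ⊆ BΓ π i := by
  intro g hg
  rw [AΓ, Set.mem_setOf_eq] at hg
  rw [BΓ, Set.mem_setOf_eq]
  exact le_of_lt hg

lemma AΓ_disjoint : ∀ i j, i ≠ j → ∀ g : G, g ∈ AΓ π i → g ∉ AΓ π j :=
  fun i j hij g hi hj =>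
    BΓ_disjoint π i j hij g (AΓ_subset_BΓ π i hi) (AΓ_subset_BΓ π j hj)

lemma pingpong_cond (emb : F₂ →* G) (hπemb : ∀ w, π (emb w) = w)
    (i : Fin 5) (u : G) (hu : u ∉ BΓ π i) :
    emb (tF i) * u ∈ AΓ π i := by
  rw [BΓ, Set.mem_setOf_eq, not_le] at hu
  set v1 := (rvec π u).1 with hv1
  set v2 := (rvec π u).2 with hv2
  set w1 : ℝ := v1 - cc i * v2 with hw1
  -- compute the new vector
  have hnew : rvec π (emb (tF i) * u) = (w1 + cc i * (2 * w1 + v2), 2 * w1 + v2) := by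
    rw [rvec, map_mul, hπemb, map_mul]
    have : (ρ (tF i) * ρ (π u)) ((1:ℝ), (0:ℝ)) = (ρ (tF i)) (rvec π u) := rfl
    rw [this, tF, map_mul, map_mul, map_pow, map_inv, map_pow, ρ_x, ρ_y]
    rw [linEquiv_mul_apply, linEquiv_mul_apply, aE_pow_inv_apply, bE_apply, aE_pow_apply]
    have hcast : 2 * ((2 * (i.1 + 1) : ℕ) : ℝ) = cc i := by
      rw [cc]; push_cast; ring
    rw [Prod.ext_iff]
    constructor
    · simp only []
      rw [hcast, hw1, hv1, hv2]
    · simp only []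
      rw [hcast, hw1, hv1, hv2]
  rw [AΓ, Set.mem_setOf_eq, hnew]
  simp only []
  have he : w1 + cc i * (2 * w1 + v2) - cc i * (2 * w1 + v2) = w1 := by ring
  rw [he]
  -- |w1| < |2 w1 + v2| given |w1| > |v2|
  have habs : |(2 : ℝ) * w1| ≤ |2 * w1 + v2| + |v2| := by
    calc |(2:ℝ) * w1| = |(2 * w1 + v2) - v2| := by ring_nf
      _ ≤ |2 * w1 + v2| + |v2| := abs_sub _ _
  rw [abs_mul] at habs
  have : |(2:ℝ)| = 2 := by norm_num
  rw [this] at habs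
  linarith

end Gamma

end PPF

/-! ### Part III: permutation side -/

namespace PPF

lemma permRepCLM_apply {n : ℕ} (σ : Equiv.Perm (Fin n)) (v : EuclideanSpace ℂ (Fin n))
    (x : Fin n) : (permRepCLM n σ v) x = v (σ⁻¹ x) := rfl

lemma stdAlg_norm_ge_of_invariant {Γ' : Type*} [Group Γ'] {n : ℕ}
    (φ : Γ' →* Equiv.Perm (Fin n)) (t : Fin 5 → Γ')
    (v : EuclideanSpace ℂ (Fin n)) (hv : v ∈ meanZero n) (hv0 : v ≠ 0)
    (hinv : ∀ (i : Fin 5) (x : Fin n), v ((φ (t i))⁻¹ x) = v x) :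
    (5 : ℝ) ≤ ‖stdAlg n φ (∑ i : Fin 5, MonoidAlgebra.of ℂ Γ' (t i))‖ := by
  set z := ∑ i : Fin 5, MonoidAlgebra.of ℂ Γ' (t i) with hz
  have hlift : (MonoidAlgebra.lift ℂ _ Γ' ((permRepCLM n).comp φ) z) v = (5 : ℂ) • v := by
    rw [hz, map_sum]
    rw [ContinuousLinearMap.sum_apply]
    have : ∀ i : Fin 5,
        (MonoidAlgebra.lift ℂ _ Γ' ((permRepCLM n).comp φ) (MonoidAlgebra.of ℂ Γ' (t i))) v
          = v := by
      intro i
      rw [MonoidAlgebra.lift_of]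
      ext x
      exact hinv i x
    rw [Finset.sum_congr rfl (fun i _ => this i)]
    rw [Finset.sum_const, Finset.card_univ, Fintype.card_fin]
    rw [← Nat.cast_smul_eq_nsmul ℂ 5 v]
    norm_num
  have happ : stdAlg n φ z ⟨v, hv⟩ = (5 : ℂ) • (⟨v, hv⟩ : meanZero n) := by
    apply Subtype.ext
    rw [stdAlg]
    rw [ContinuousLinearMap.comp_apply, ContinuousLinearMap.comp_apply]
    have hsub : ((meanZero n).subtypeL (⟨v, hv⟩ : meanZero n)) = v := rfl
    rw [hsub, hlift]
    have hmem : (5 : ℂ) • v ∈ meanZero n := Submodule.smul_mem _ _ hv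
    rw [show (((meanZero n).orthogonalProjectionOnto) ((5:ℂ) • v) : EuclideanSpace ℂ (Fin n))
        = (5:ℂ) • v from Submodule.starProjection_eq_self_iff.mpr hmem]
    rfl
  have hvn : (⟨v, hv⟩ : meanZero n) ≠ 0 := by
    intro h
    exact hv0 (congrArg Subtype.val h)
  have hnorm : ‖stdAlg n φ z (⟨v, hv⟩ : meanZero n)‖ = 5 * ‖(⟨v, hv⟩ : meanZero n)‖ := by
    rw [happ, norm_smul]
    norm_num
  have hle := (stdAlg n φ z).le_opNorm (⟨v, hv⟩ : meanZero n)
  rw [hnorm] at hle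
  have hpos : 0 < ‖(⟨v, hv⟩ : meanZero n)‖ := norm_pos_iff.mpr hvn
  exact le_of_mul_le_mul_right hle hpos

lemma exists_invariant_of_not_transitive {n : ℕ} (σ : F₂ →* Equiv.Perm (Fin n))
    (h : ¬ ∀ p q : Fin n, ∃ w : F₂, σ w p = q) :
    ∃ v : EuclideanSpace ℂ (Fin n), v ∈ meanZero n ∧ v ≠ 0 ∧
      ∀ (w : F₂) (x : Fin n), v ((σ w)⁻¹ x) = v x := by
  classical
  push_neg at h
  obtain ⟨p, q, hq⟩ := h
  set O : Finset (Fin n) := Finset.univ.filter (fun r => ∃ w : F₂, σ w p = r) with hO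
  have hpO : p ∈ O := by
    rw [hO]
    simp only [Finset.mem_filter, Finset.mem_univ, true_and]
    exact ⟨1, by simp⟩
  have hqO : q ∉ O := by
    rw [hO]
    simp only [Finset.mem_filter, Finset.mem_univ, true_and]
    push_neg
    exact hq
  have hOinv : ∀ (w : F₂) (r : Fin n), r ∈ O → σ w r ∈ O := by
    intro w r hr
    rw [hO, Finset.mem_filter] at hr ⊢
    obtain ⟨-, w0, hw0⟩ := hr
    exact ⟨Finset.mem_univ _, w * w0, by rw [map_mul, Equiv.Perm.mul_apply, hw0]⟩
  have hmemiff : ∀ (w : F₂) (x : Fin n), ((σ w)⁻¹ x ∈ O ↔ x ∈ O) := by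
    intro w x
    constructor
    · intro hx
      have := hOinv w _ hx
      simpa using this
    · intro hx
      have := hOinv w⁻¹ _ hx
      rwa [map_inv] at this
  set v : EuclideanSpace ℂ (Fin n) :=
    WithLp.toLp 2 (fun r => if r ∈ O then ((Oᶜ.card : ℂ)) else (-(O.card : ℂ))) with hvdef
  refine ⟨v, ?_, ?_, ?_⟩
  · show ∑ r, v r = 0
    have : ∑ r ∈ O, v r + ∑ r ∈ Oᶜ, v r = ∑ r, v r := Finset.sum_add_sum_compl O v
    rw [← this]
    rw [Finset.sum_congr rfl (fun r hr => show v r = (Oᶜ.card : ℂ) from by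
      rw [hvdef]; simp only [PiLp.toLp_apply, if_pos hr])]
    rw [Finset.sum_congr rfl (fun r hr => show v r = -(O.card : ℂ) from by
      rw [hvdef]
      simp only [PiLp.toLp_apply]
      rw [if_neg (Finset.mem_compl.mp hr)])]
    rw [Finset.sum_const, Finset.sum_const]
    simp only [nsmul_eq_mul, mul_neg]
    ring
  · intro h0
    have : v p = 0 := by rw [h0]; rfl
    rw [hvdef] at this
    simp only [PiLp.toLp_apply, if_pos hpO] at this
    have hcard : 0 < Oᶜ.card := Finset.card_pos.mpr ⟨q, Finset.mem_compl.mpr hqO⟩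
    rw [Nat.cast_eq_zero] at this
    omega
  · intro w x
    rw [hvdef]
    simp only [PiLp.toLp_apply]
    by_cases hx : x ∈ O
    · rw [if_pos ((hmemiff w x).mpr hx), if_pos hx]
    · rw [if_neg (fun hc => hx ((hmemiff w x).mp hc)), if_neg hx]

/-! ### Part IV: group theory -/

def emb1 : F₂ →* F₂ × F₂ × F₂ := MonoidHom.inl F₂ (F₂ × F₂)
def emb2 : F₂ →* F₂ × F₂ × F₂ := (MonoidHom.inr F₂ (F₂ × F₂)).comp (MonoidHom.inl F₂ F₂)
def emb3 : F₂ →* F₂ × F₂ × F₂ := (MonoidHom.inr F₂ (F₂ × F₂)).comp (MonoidHom.inr F₂ F₂)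
def proj2 : F₂ × F₂ × F₂ →* F₂ := (MonoidHom.fst F₂ F₂).comp (MonoidHom.snd F₂ (F₂ × F₂))
def proj3 : F₂ × F₂ × F₂ →* F₂ := (MonoidHom.snd F₂ F₂).comp (MonoidHom.snd F₂ (F₂ × F₂))

lemma proj2_emb2 (w : F₂) : proj2 (emb2 w) = w := rfl
lemma proj3_emb3 (w : F₂) : proj3 (emb3 w) = w := rfl

lemma emb1_mul_emb2 (w u : F₂) : emb1 w * emb2 u = emb2 u * emb1 w := by
  simp [emb1, emb2, Prod.ext_iff]
lemma emb1_mul_emb3 (w u : F₂) : emb1 w * emb3 u = emb3 u * emb1 w := by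
  simp [emb1, emb3, Prod.ext_iff]
lemma emb3_mul_emb2 (w u : F₂) : emb3 w * emb2 u = emb2 u * emb3 w := by
  simp [emb3, emb2, Prod.ext_iff]

lemma fix_eq_one {X : Type*} (K : F₂ → Equiv.Perm X)
    (htrans : ∀ p q : X, ∃ w, K w p = q)
    (σ : Equiv.Perm X) (hσ : ∀ w, σ * K w = K w * σ)
    {p : X} (hp : σ p = p) : σ = 1 := by
  ext q
  obtain ⟨w, hw⟩ := htrans p q
  have h1 : σ q = σ (K w p) := by rw [hw]
  have h2 : σ (K w p) = K w (σ p) := by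
    rw [← Equiv.Perm.mul_apply, hσ w, Equiv.Perm.mul_apply]
  rw [h1, h2, hp, hw]
  rfl

lemma phi_emb1_commutator_eq_one {n : ℕ} (φ : F₂ × F₂ × F₂ →* Equiv.Perm (Fin n))
    (htrans2 : ∀ p q : Fin n, ∃ w : F₂, φ (emb2 w) p = q)
    (htrans3 : ∀ p q : Fin n, ∃ w : F₂, φ (emb3 w) p = q) :
    φ (emb1 cF) = 1 := by
  have hcomm : ∀ w u : F₂, φ (emb1 w) * φ (emb1 u) = φ (emb1 u) * φ (emb1 w) := by
    intro w u
    rcases isEmpty_or_nonempty (Fin n) with hE | hNE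
    · ext q
      exact isEmptyElim q
    · obtain ⟨p⟩ := hNE
      set h := φ (emb1 u) with hh
      obtain ⟨u3, hu3⟩ := htrans3 p (h p)
      set τ := φ (emb3 u3) with hτ
      have hστ : h = τ := by
        have hfix : (τ⁻¹ * h) p = p := by
          rw [Equiv.Perm.mul_apply, ← hu3]
          simp
        have hcomm2 : ∀ w2 : F₂, (τ⁻¹ * h) * φ (emb2 w2) = φ (emb2 w2) * (τ⁻¹ * h) := by
          intro w2
          have c1 : h * φ (emb2 w2) = φ (emb2 w2) * h := by
            rw [hh, ← map_mul, ← map_mul, emb1_mul_emb2]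
          have c2 : τ * φ (emb2 w2) = φ (emb2 w2) * τ := by
            rw [hτ, ← map_mul, ← map_mul, emb3_mul_emb2]
          have c2' : τ⁻¹ * φ (emb2 w2) = φ (emb2 w2) * τ⁻¹ := by
            have := congrArg (fun s => τ⁻¹ * s * τ⁻¹) c2
            simpa [mul_assoc] using this.symm
          rw [mul_assoc, c1, ← mul_assoc, c2', mul_assoc]
        have := fix_eq_one (fun w2 => φ (emb2 w2)) htrans2 (τ⁻¹ * h) hcomm2 hfix
        have h2 : τ * (τ⁻¹ * h) = τ * 1 := by rw [this]
        simpa [mul_assoc] using h2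
      have c3 : φ (emb1 w) * τ = τ * φ (emb1 w) := by
        rw [hτ, ← map_mul, ← map_mul, emb1_mul_emb3]
      rw [hστ, c3]
  have hx := hcomm xg yg
  simp only [cF, map_mul, map_inv]
  rw [hx]
  group

end PPF

/-! ### Part V: bridges -/

namespace PPF

lemma leftRegularAlg_pingpong_le (π : F₂ × F₂ × F₂ →* F₂) (emb : F₂ →* F₂ × F₂ × F₂)
    (hπemb : ∀ w, π (emb w) = w) :
    ‖leftRegularAlg (F₂ × F₂ × F₂)
        (∑ i : Fin 5, MonoidAlgebra.of ℂ (F₂ × F₂ × F₂) (emb (tF i)))‖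
      ≤ 2 * Real.sqrt 5 := by
  have hmap : leftRegularAlg (F₂ × F₂ × F₂)
        (∑ i : Fin 5, MonoidAlgebra.of ℂ (F₂ × F₂ × F₂) (emb (tF i)))
      = ∑ i : Fin 5, leftRegularRep (F₂ × F₂ × F₂) (emb (tF i)) := by
    rw [leftRegularAlg, map_sum]
    exact Finset.sum_congr rfl fun i _ => MonoidAlgebra.lift_of _ _
  rw [hmap]
  have := pingpong_opNorm_le 5 (fun i => emb (tF i)) (AΓ π) (BΓ π)
    (AΓ_disjoint π) (BΓ_disjoint π) (fun i u hu => pingpong_cond π emb hπemb i u hu)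
  have h5 : ((5:ℕ):ℝ) = (5:ℝ) := by norm_num
  rwa [h5] at this

lemma emb1_cF_ne_one : emb1 cF ≠ 1 := by
  intro h
  exact cF_ne_one (congrArg Prod.fst h)

lemma one_le_norm_leftRegularAlg_zc :
    (1:ℝ) ≤ ‖leftRegularAlg (F₂ × F₂ × F₂)
        (1 - MonoidAlgebra.of ℂ (F₂ × F₂ × F₂) (emb1 cF))‖ := by
  classical
  set G := F₂ × F₂ × F₂
  set δ : ellTwo G := lp.single 2 (1 : G) (1:ℂ) with hδ
  have hδnorm : ‖δ‖ = 1 := by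
    have := lp.norm_single (p := 2) (E := fun _ : G => ℂ) (by norm_num)
      (1 : G) (1:ℂ)
    rw [hδ, this]; simp
  set T := leftRegularAlg G (1 - MonoidAlgebra.of ℂ G (emb1 cF)) with hT
  have happly : T δ = δ - leftRegularRep G (emb1 cF) δ := by
    rw [hT, map_sub, map_one, leftRegularAlg, MonoidAlgebra.lift_of]
    rfl
  have hval : ((T δ : ellTwo G) : G → ℂ) (1:G) = 1 := by
    rw [happly, lp.coeFn_sub, Pi.sub_apply, leftRegularRep_apply]
    have h1 : (δ : G → ℂ) (1:G) = 1 := by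
      rw [hδ]; exact lp.single_apply_self (E := fun _ : G => ℂ) 2 (1:G) (1:ℂ)
    have h2 : (δ : G → ℂ) ((emb1 cF)⁻¹ * 1) = 0 := by
      rw [hδ]
      refine lp.single_apply_ne (E := fun _ : G => ℂ) 2 (1:G) (1:ℂ) ?_
      simp only [mul_one]
      intro hc
      exact emb1_cF_ne_one (by rw [← inv_inv (emb1 cF), hc, inv_one])
    rw [h1, h2, sub_zero]
  have hnv : (1:ℝ) ≤ ‖T δ‖ := by
    have := lp.norm_apply_le_norm (E := fun _ : G => ℂ) (p := 2) (by norm_num) (T δ) (1:G)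
    rw [hval] at this
    simpa using this
  have := T.le_opNorm δ
  rw [hδnorm, mul_one] at this
  linarith

lemma stdAlg_zc_eq_zero {n : ℕ} (φ : F₂ × F₂ × F₂ →* Equiv.Perm (Fin n))
    (h1 : φ (emb1 cF) = 1) :
    stdAlg n φ (1 - MonoidAlgebra.of ℂ (F₂ × F₂ × F₂) (emb1 cF)) = 0 := by
  have hmid : (MonoidAlgebra.lift ℂ _ (F₂ × F₂ × F₂) ((permRepCLM n).comp φ))
      (1 - MonoidAlgebra.of ℂ (F₂ × F₂ × F₂) (emb1 cF)) = 0 := by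
    rw [map_sub, map_one, MonoidAlgebra.lift_of, MonoidHom.comp_apply, h1, map_one, sub_self]
  rw [stdAlg, hmid]
  rw [ContinuousLinearMap.zero_comp, ContinuousLinearMap.comp_zero]

end PPF

set_option synthInstance.maxHeartbeats 1000000
set_option maxHeartbeats 2000000

/-- `F₂ × F₂ × F₂` is not purely permutation field: there is no sequence of
homomorphisms to symmetric groups whose standard representations strongly converge to the left
regular representation. -/
theorem F2xF2xF2_not_PPermF :
    ¬ ∃ (n : ℕ → ℕ) (φ : ∀ i, F₂ × F₂ × F₂ →* Equiv.Perm (Fin (n i))),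
      ∀ z : MonoidAlgebra ℂ (F₂ × F₂ × F₂),
        Tendsto (fun i => ‖stdAlg (n i) (φ i) z‖) atTop
          (nhds ‖leftRegularAlg (F₂ × F₂ × F₂) z‖) := by
  rintro ⟨n, φ, hconv⟩
  set z2 : MonoidAlgebra ℂ (F₂ × F₂ × F₂) :=
    ∑ i : Fin 5, MonoidAlgebra.of ℂ (F₂ × F₂ × F₂) (PPF.emb2 (PPF.tF i)) with hz2
  set z3 : MonoidAlgebra ℂ (F₂ × F₂ × F₂) :=
    ∑ i : Fin 5, MonoidAlgebra.of ℂ (F₂ × F₂ × F₂) (PPF.emb3 (PPF.tF i)) with hz3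
  set zc : MonoidAlgebra ℂ (F₂ × F₂ × F₂) :=
    1 - MonoidAlgebra.of ℂ (F₂ × F₂ × F₂) (PPF.emb1 PPF.cF) with hzc
  have h25 : 2 * Real.sqrt 5 < 5 := by
    nlinarith [Real.sq_sqrt (show (0:ℝ) ≤ 5 by norm_num), Real.sqrt_nonneg 5]
  have hb2 : ‖leftRegularAlg (F₂ × F₂ × F₂) z2‖ < 5 :=
    lt_of_le_of_lt (PPF.leftRegularAlg_pingpong_le PPF.proj2 PPF.emb2 PPF.proj2_emb2) h25
  have hb3 : ‖leftRegularAlg (F₂ × F₂ × F₂) z3‖ < 5 :=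
    lt_of_le_of_lt (PPF.leftRegularAlg_pingpong_le PPF.proj3 PPF.emb3 PPF.proj3_emb3) h25
  have hev2 : ∀ᶠ i in atTop, ‖stdAlg (n i) (φ i) z2‖ < 5 :=
    (hconv z2).eventually_lt_const hb2
  have hev3 : ∀ᶠ i in atTop, ‖stdAlg (n i) (φ i) z3‖ < 5 :=
    (hconv z3).eventually_lt_const hb3
  have htr2 : ∀ᶠ i in atTop, ∀ p q : Fin (n i), ∃ w : F₂, (φ i) (PPF.emb2 w) p = q := by
    refine hev2.mono fun i hi => ?_
    by_contra hnt
    obtain ⟨v, hv, hv0, hinv⟩ :=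
      PPF.exists_invariant_of_not_transitive ((φ i).comp PPF.emb2) hnt
    have := PPF.stdAlg_norm_ge_of_invariant (φ i) (fun j => PPF.emb2 (PPF.tF j)) v hv hv0
      (fun j x => hinv (PPF.tF j) x)
    rw [← hz2] at this
    linarith
  have htr3 : ∀ᶠ i in atTop, ∀ p q : Fin (n i), ∃ w : F₂, (φ i) (PPF.emb3 w) p = q := by
    refine hev3.mono fun i hi => ?_
    by_contra hnt
    obtain ⟨v, hv, hv0, hinv⟩ :=
      PPF.exists_invariant_of_not_transitive ((φ i).comp PPF.emb3) hnt
    have := PPF.stdAlg_norm_ge_of_invariant (φ i) (fun j => PPF.emb3 (PPF.tF j)) v hv hv0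
      (fun j x => hinv (PPF.tF j) x)
    rw [← hz3] at this
    linarith
  have hevc : ∀ᶠ i in atTop, ‖stdAlg (n i) (φ i) zc‖ = 0 := by
    refine (htr2.and htr3).mono fun i ⟨h2, h3⟩ => ?_
    have h1 := PPF.phi_emb1_commutator_eq_one (φ i) h2 h3
    calc ‖stdAlg (n i) (φ i) zc‖
        = ‖(0 : meanZero (n i) →L[ℂ] meanZero (n i))‖ := by
          rw [hzc, PPF.stdAlg_zc_eq_zero (φ i) h1]
      _ = 0 := ContinuousLinearMap.opNorm_zero
  have hlim0 : Tendsto (fun i => ‖stdAlg (n i) (φ i) zc‖) atTop (nhds 0) := by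
    refine Tendsto.congr' (hevc.mono fun i hi => hi.symm) tendsto_const_nhds
  have hzero := tendsto_nhds_unique (hconv zc) hlim0
  have hone := PPF.one_le_norm_leftRegularAlg_zc
  rw [← hzc] at hone
  rw [hzero] at hone
  linarith

end
end

section
/- Suppose π_i is a sequence of unitary representations of a locally compact group G strongly converging to a representation π_∞ (i.e., ‖π_i(f)‖ → ‖π_∞(f)‖ for all f ∈ C_c(G)). If K is a compact subset of the unitary dual disjoint from the support of π_∞, then there exists i₀ such that for all i > i₀, no element of K is weakly contained in π_i. -/
noncomputable section
open Filter

/-- A strongly continuous unitary representation of `G` on a complex Hilbert space. -/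
structure UnitaryRep (G : Type) [Group G] [TopologicalSpace G] where
  carrier : Type
  [nacg : NormedAddCommGroup carrier]
  [ips : InnerProductSpace ℂ carrier]
  [complete : CompleteSpace carrier]
  ρ : G →* (carrier →L[ℂ] carrier)
  unitary' : ∀ g, ρ g ∈ unitary (carrier →L[ℂ] carrier)
  continuous' : Continuous fun p : G × carrier => ρ p.1 p.2

attribute [instance] UnitaryRep.nacg UnitaryRep.ips UnitaryRep.complete

variable {G : Type} [Group G] [TopologicalSpace G] [MeasurableSpace G]

/-- The smoothed operator `π(f) = ∫ f(g) π(g) dμ(g)`. -/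
def UnitaryRep.op (π : UnitaryRep G) (μ : MeasureTheory.Measure G) (f : G → ℂ) :
    π.carrier →L[ℂ] π.carrier :=
  ∫ g, f g • π.ρ g  ∂μ

/-- Weak containment `π ≺ σ`, characterized by `‖π(f)‖ ≤ ‖σ(f)‖` for all `f ∈ C_c(G)`. -/
def WeaklyContained (μ : MeasureTheory.Measure G) (π σ : UnitaryRep G) : Prop :=
  ∀ f : G → ℂ, Continuous f → HasCompactSupport f → ‖π.op μ f‖ ≤ ‖σ.op μ f‖

/-- Irreducibility: the only closed invariant subspaces are `⊥` and `⊤`. -/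
def UnitaryRep.Irreducible (π : UnitaryRep G) : Prop :=
  ∀ K : Submodule ℂ π.carrier, IsClosed (K : Set π.carrier) →
    (∀ g, ∀ v ∈ K, π.ρ g v ∈ K) → K = ⊥ ∨ K = ⊤

/-- A basic Fell neighbourhood of `π`: representations `π'` having a vector `ξ'` whose diagonal
matrix coefficient is uniformly `ε`-close on the compact set `F` to that of the vector `ξ`. -/
def fellBasicSet (π : UnitaryRep G) (ξ : π.carrier) (F : Set G) (ε : ℝ) :
    Set (UnitaryRep G) :=
  {π' | ∃ ξ' : π'.carrier, ∀ g ∈ F,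
    ‖(inner (𝕜 := ℂ) (π'.ρ g ξ') ξ') - (inner (𝕜 := ℂ) (π.ρ g ξ) ξ)‖ < ε}

/-- The Fell topology on unitary representations of `G`, generated by the basic
neighbourhoods of diagonal matrix coefficients on compact sets. -/
def fellTopology (G : Type) [Group G] [TopologicalSpace G] :
    TopologicalSpace (UnitaryRep G) :=
  TopologicalSpace.generateFrom
    {S | ∃ (π : UnitaryRep G) (ξ : π.carrier) (F : Set G) (ε : ℝ),
      IsCompact F ∧ 0 < ε ∧ S = fellBasicSet π ξ F ε}

set_option linter.unusedSectionVars false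
open MeasureTheory

variable {G : Type} [Group G] [TopologicalSpace G] [MeasurableSpace G]

namespace UnitaryRep

lemma inner_map (τ : UnitaryRep G) (g : G) (x y : τ.carrier) :
    inner (𝕜 := ℂ) (τ.ρ g x) (τ.ρ g y) = inner (𝕜 := ℂ) x y := by
  have h1 : (ContinuousLinearMap.adjoint (τ.ρ g)) ((τ.ρ g) x) = x := by
    have h := (τ.unitary' g).1
    rw [ContinuousLinearMap.star_eq_adjoint] at h
    calc (ContinuousLinearMap.adjoint (τ.ρ g)) ((τ.ρ g) x)
        = ((ContinuousLinearMap.adjoint (τ.ρ g)) * (τ.ρ g)) x := rfl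
      _ = x := by rw [h]; rfl
  rw [← ContinuousLinearMap.adjoint_inner_left, h1]

lemma norm_map (τ : UnitaryRep G) (g : G) (x : τ.carrier) : ‖τ.ρ g x‖ = ‖x‖ := by
  have h := τ.inner_map g x x
  have h2 : (‖τ.ρ g x‖ : ℝ) ^ 2 = ‖x‖ ^ 2 := by
    rw [← inner_self_eq_norm_sq (𝕜 := ℂ), ← inner_self_eq_norm_sq (𝕜 := ℂ)]
    exact_mod_cast congrArg Complex.re h
  nlinarith [norm_nonneg (τ.ρ g x), norm_nonneg x]

lemma norm_ρ_le (τ : UnitaryRep G) (g : G) : ‖τ.ρ g‖ ≤ 1 :=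
  ContinuousLinearMap.opNorm_le_bound _ zero_le_one fun x => by
    rw [τ.norm_map, one_mul]

lemma continuous_apply (τ : UnitaryRep G) (x : τ.carrier) :
    Continuous fun g => τ.ρ g x :=
  τ.continuous'.comp (continuous_id.prodMk continuous_const)

/-- The diagonal matrix coefficient. -/
def mcoef (τ : UnitaryRep G) (ξ : τ.carrier) : G → ℂ :=
  fun g => inner (𝕜 := ℂ) ξ (τ.ρ g ξ)

lemma continuous_mcoef (τ : UnitaryRep G) (ξ : τ.carrier) : Continuous (τ.mcoef ξ) :=
  Continuous.inner continuous_const (τ.continuous_apply ξ)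

lemma norm_mcoef_le (τ : UnitaryRep G) (ξ : τ.carrier) (g : G) :
    ‖τ.mcoef ξ g‖ ≤ ‖ξ‖ ^ 2 := by
  calc ‖τ.mcoef ξ g‖ ≤ ‖ξ‖ * ‖τ.ρ g ξ‖ := norm_inner_le_norm _ _
  _ = ‖ξ‖ ^ 2 := by rw [τ.norm_map]; ring

end UnitaryRep

namespace UnitaryRep

lemma integrable_apply {μ : MeasureTheory.Measure G} {f : G → ℂ} {τ : UnitaryRep G}
    (hInt : MeasureTheory.Integrable (fun g => f g • τ.ρ g) μ) (ξ : τ.carrier) :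
    MeasureTheory.Integrable (fun g => f g • τ.ρ g ξ) μ := by
  have := (ContinuousLinearMap.apply ℂ τ.carrier ξ).integrable_comp hInt
  simpa using this

lemma op_apply {μ : MeasureTheory.Measure G} {f : G → ℂ} {τ : UnitaryRep G}
    (hInt : MeasureTheory.Integrable (fun g => f g • τ.ρ g) μ) (ξ : τ.carrier) :
    τ.op μ f ξ = ∫ g, f g • τ.ρ g ξ ∂μ := by
  rw [UnitaryRep.op, ContinuousLinearMap.integral_apply hInt]
  simp

lemma inner_ρ_ρ (τ : UnitaryRep G) (ξ : τ.carrier) (t s : G) :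
    inner (𝕜 := ℂ) (τ.ρ t ξ) (τ.ρ s ξ) = τ.mcoef ξ (t⁻¹ * s) := by
  have : τ.ρ s ξ = τ.ρ t (τ.ρ (t⁻¹ * s) ξ) := by
    rw [← ContinuousLinearMap.comp_apply, ← ContinuousLinearMap.mul_def, ← map_mul]
    rw [mul_inv_cancel_left]
  rw [this, τ.inner_map, mcoef]

lemma inner_op_self (τ : UnitaryRep G) (μ : MeasureTheory.Measure G) (f : G → ℂ)
    (hInt : MeasureTheory.Integrable (fun g => f g • τ.ρ g) μ) (ξ : τ.carrier) :
    inner (𝕜 := ℂ) (τ.op μ f ξ) (τ.op μ f ξ)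
      = ∫ s, f s * ∫ t, (starRingEnd ℂ) (f t) * τ.mcoef ξ (t⁻¹ * s) ∂μ ∂μ := by
  set u := τ.op μ f ξ with hu
  have h1 : u = ∫ g, f g • τ.ρ g ξ ∂μ := op_apply hInt ξ
  have hIa := integrable_apply hInt ξ
  calc inner (𝕜 := ℂ) u u = ∫ s, inner (𝕜 := ℂ) u (f s • τ.ρ s ξ) ∂μ := by
        rw [show inner (𝕜 := ℂ) u u = inner (𝕜 := ℂ) u (∫ g, f g • τ.ρ g ξ ∂μ) by rw [← h1]]
        exact (integral_inner (𝕜 := ℂ) hIa u).symm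
    _ = ∫ s, f s * inner (𝕜 := ℂ) u (τ.ρ s ξ) ∂μ := by
        simp only [inner_smul_right]
    _ = ∫ s, f s * ∫ t, (starRingEnd ℂ) (f t) * τ.mcoef ξ (t⁻¹ * s) ∂μ ∂μ := by
        apply MeasureTheory.integral_congr_ae
        filter_upwards with s
        congr 1
        have h2 : inner (𝕜 := ℂ) (τ.ρ s ξ) u
            = ∫ t, f t * inner (𝕜 := ℂ) (τ.ρ s ξ) (τ.ρ t ξ) ∂μ := by
          rw [h1, ← integral_inner (𝕜 := ℂ) hIa]
          simp only [inner_smul_right]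
        calc inner (𝕜 := ℂ) u (τ.ρ s ξ)
            = (starRingEnd ℂ) (inner (𝕜 := ℂ) (τ.ρ s ξ) u) := by rw [inner_conj_symm]
          _ = (starRingEnd ℂ) (∫ t, f t * inner (𝕜 := ℂ) (τ.ρ s ξ) (τ.ρ t ξ) ∂μ) := by rw [h2]
          _ = ∫ t, (starRingEnd ℂ) (f t * inner (𝕜 := ℂ) (τ.ρ s ξ) (τ.ρ t ξ)) ∂μ := by
              rw [← integral_conj]
          _ = ∫ t, (starRingEnd ℂ) (f t) * τ.mcoef ξ (t⁻¹ * s) ∂μ := by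
              apply MeasureTheory.integral_congr_ae
              filter_upwards with t
              rw [map_mul, ← inner_conj_symm, inner_ρ_ρ, Complex.conj_conj]

end UnitaryRep

open MeasureTheory in
lemma UnitaryRep.integrable_smul_ρ [IsTopologicalGroup G] [BorelSpace G]
    (τ : UnitaryRep G) (μ : MeasureTheory.Measure G) [μ.IsHaarMeasure]
    {f₀ : G → ℂ} (hf₀c : Continuous f₀)
    (h₀ : MeasureTheory.Integrable (fun g => f₀ g • τ.ρ g) μ) (hne : ∃ v, f₀ v ≠ 0)
    {f : G → ℂ} (hfc : Continuous f) (hfs : HasCompactSupport f) :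
    MeasureTheory.Integrable (fun g => f g • τ.ρ g) μ := by
  classical
  set V : Set G := {g | f₀ g ≠ 0} with hV
  have hVopen : IsOpen V := isOpen_compl_singleton.preimage hf₀c
  set ρfun : G → (τ.carrier →L[ℂ] τ.carrier) := fun g => τ.ρ g with hρfun
  -- Step 1 : strong measurability on V
  have step1 : AEStronglyMeasurable ρfun (μ.restrict V) := by
    have hF : AEStronglyMeasurable (fun g => f₀ g • τ.ρ g) (μ.restrict V) :=
      h₀.aestronglyMeasurable.restrict
    have hinv : AEStronglyMeasurable (fun g => (f₀ g)⁻¹) (μ.restrict V) :=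
      (hf₀c.measurable.inv).aestronglyMeasurable
    have h5 : AEStronglyMeasurable (fun g => (f₀ g)⁻¹ • (f₀ g • τ.ρ g)) (μ.restrict V) :=
      hinv.smul hF
    refine h5.congr ?_
    refine (MeasureTheory.ae_restrict_iff' hVopen.measurableSet).2 (MeasureTheory.ae_of_all _ ?_)
    intro g hg
    simp only [smul_smul, inv_mul_cancel₀ hg, one_smul, hρfun]
  -- Step 2 : translation
  have step2 : ∀ g₀ : G, AEStronglyMeasurable ρfun (μ.restrict ((fun x => g₀⁻¹ * x) ⁻¹' V)) := by
    intro g₀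
    set W : Set G := (fun x => g₀⁻¹ * x) ⁻¹' V with hW
    have hmap : (μ.restrict W).map (fun x => g₀⁻¹ * x) = μ.restrict V := by
      rw [← MeasureTheory.Measure.restrict_map (measurable_const_mul g₀⁻¹)
        hVopen.measurableSet, MeasureTheory.map_mul_left_eq_self μ g₀⁻¹]
    have h4 : AEStronglyMeasurable (fun x => ρfun (g₀⁻¹ * x)) (μ.restrict W) := by
      have := AEStronglyMeasurable.comp_measurable (hmap ▸ step1) (measurable_const_mul g₀⁻¹)
      exact this
    have h6 : AEStronglyMeasurable
        (fun x => (ContinuousLinearMap.compL ℂ τ.carrier τ.carrier τ.carrier (τ.ρ g₀))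
          (ρfun (g₀⁻¹ * x))) (μ.restrict W) :=
      (ContinuousLinearMap.compL ℂ τ.carrier τ.carrier τ.carrier
        (τ.ρ g₀)).continuous.comp_aestronglyMeasurable h4
    refine h6.congr (MeasureTheory.ae_of_all _ fun x => ?_)
    show (τ.ρ g₀).comp (τ.ρ (g₀⁻¹ * x)) = τ.ρ x
    rw [← ContinuousLinearMap.mul_def, ← map_mul, mul_inv_cancel_left]
  -- Step 3 : finite cover of the support
  obtain ⟨v, hv⟩ := hne
  have hcov : tsupport f ⊆ ⋃ g₀ : G, ((fun x => g₀⁻¹ * x) ⁻¹' V) := by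
    intro s _
    refine Set.mem_iUnion.2 ⟨s * v⁻¹, ?_⟩
    show (s * v⁻¹)⁻¹ * s ∈ V
    simpa [mul_assoc, hV] using hv
  obtain ⟨T, hT⟩ := hfs.elim_finite_subcover (fun g₀ : G => ((fun x => g₀⁻¹ * x) ⁻¹' V))
    (fun g₀ => hVopen.preimage (continuous_mul_left g₀⁻¹)) hcov
  set U : Set G := ⋃ i : T, ((fun x => (i : G)⁻¹ * x) ⁻¹' V) with hU
  have hTU : tsupport f ⊆ U := by
    intro s hs
    obtain ⟨g₀, hg₀, hmem⟩ := Set.mem_iUnion₂.1 (hT hs)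
    exact Set.mem_iUnion.2 ⟨⟨g₀, hg₀⟩, hmem⟩
  have hUmeas : MeasurableSet U :=
    MeasurableSet.iUnion fun i =>
      (hVopen.preimage (continuous_mul_left ((i : G))⁻¹)).measurableSet
  -- Step 4 : measurability on U
  have step4 : AEStronglyMeasurable ρfun (μ.restrict U) := by
    rw [hU, aestronglyMeasurable_iUnion_iff]
    exact fun i => step2 i
  -- Step 5 : global measurability
  have step5 : AEStronglyMeasurable (fun g => f g • τ.ρ g) μ := by
    have h7 : AEStronglyMeasurable (fun g => f g • τ.ρ g) (μ.restrict U) :=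
      hfc.aestronglyMeasurable.restrict.smul step4
    have h8 := (aestronglyMeasurable_indicator_iff hUmeas).2 h7
    refine h8.congr (MeasureTheory.ae_of_all _ fun g => ?_)
    by_cases hg : g ∈ U
    · simp [Set.indicator_of_mem hg]
    · have hgS : g ∉ tsupport f := fun h => hg (hTU h)
      simp [Set.indicator_of_notMem hg, image_eq_zero_of_notMem_tsupport hgS]
  -- Step 6 : integrability
  refine MeasureTheory.Integrable.mono'
    (hfc.norm.integrable_of_hasCompactSupport hfs.norm) step5
    (MeasureTheory.ae_of_all _ fun g => ?_)
  rw [norm_smul]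
  calc ‖f g‖ * ‖τ.ρ g‖ ≤ ‖f g‖ * 1 := by
        have := τ.norm_ρ_le g
        exact mul_le_mul_of_nonneg_left this (norm_nonneg _)
    _ = ‖f g‖ := mul_one _

namespace UnitaryRep

lemma inner_op_ρ {τ : UnitaryRep G} {μ : MeasureTheory.Measure G} {f : G → ℂ}
    (hInt : MeasureTheory.Integrable (fun g => f g • τ.ρ g) μ) (ξ : τ.carrier) (s : G) :
    inner (𝕜 := ℂ) (τ.op μ f ξ) (τ.ρ s ξ)
      = ∫ t, (starRingEnd ℂ) (f t) * τ.mcoef ξ (t⁻¹ * s) ∂μ := by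
  have h1 : τ.op μ f ξ = ∫ g, f g • τ.ρ g ξ ∂μ := op_apply hInt ξ
  have hIa := integrable_apply hInt ξ
  have h2 : inner (𝕜 := ℂ) (τ.ρ s ξ) (τ.op μ f ξ)
      = ∫ t, f t * inner (𝕜 := ℂ) (τ.ρ s ξ) (τ.ρ t ξ) ∂μ := by
    rw [h1, ← integral_inner (𝕜 := ℂ) hIa]
    simp only [inner_smul_right]
  calc inner (𝕜 := ℂ) (τ.op μ f ξ) (τ.ρ s ξ)
      = (starRingEnd ℂ) (inner (𝕜 := ℂ) (τ.ρ s ξ) (τ.op μ f ξ)) := by rw [inner_conj_symm]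
    _ = (starRingEnd ℂ) (∫ t, f t * inner (𝕜 := ℂ) (τ.ρ s ξ) (τ.ρ t ξ) ∂μ) := by rw [h2]
    _ = ∫ t, (starRingEnd ℂ) (f t * inner (𝕜 := ℂ) (τ.ρ s ξ) (τ.ρ t ξ)) ∂μ := by
        rw [← integral_conj]
    _ = ∫ t, (starRingEnd ℂ) (f t) * τ.mcoef ξ (t⁻¹ * s) ∂μ := by
        apply MeasureTheory.integral_congr_ae
        filter_upwards with t
        rw [map_mul, ← inner_conj_symm, inner_ρ_ρ, Complex.conj_conj]

lemma inner_op_self' (τ : UnitaryRep G) (μ : MeasureTheory.Measure G) {f : G → ℂ}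
    (hInt : MeasureTheory.Integrable (fun g => f g • τ.ρ g) μ) (ξ : τ.carrier) :
    inner (𝕜 := ℂ) (τ.op μ f ξ) (τ.op μ f ξ)
      = ∫ s, f s * inner (𝕜 := ℂ) (τ.op μ f ξ) (τ.ρ s ξ) ∂μ := by
  have h1 : τ.op μ f ξ = ∫ g, f g • τ.ρ g ξ ∂μ := op_apply hInt ξ
  have hIa := integrable_apply hInt ξ
  calc inner (𝕜 := ℂ) (τ.op μ f ξ) (τ.op μ f ξ)
      = inner (𝕜 := ℂ) (τ.op μ f ξ) (∫ g, f g • τ.ρ g ξ ∂μ) := by rw [← h1]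
    _ = ∫ s, inner (𝕜 := ℂ) (τ.op μ f ξ) (f s • τ.ρ s ξ) ∂μ :=
        (integral_inner (𝕜 := ℂ) hIa _).symm
    _ = ∫ s, f s * inner (𝕜 := ℂ) (τ.op μ f ξ) (τ.ρ s ξ) ∂μ := by
        simp only [inner_smul_right]

end UnitaryRep

set_option maxHeartbeats 1000000 in
open MeasureTheory in
lemma exists_good [IsTopologicalGroup G] [BorelSpace G]
    (μ : MeasureTheory.Measure G) [μ.IsHaarMeasure] (πinf : UnitaryRep G)
    (K : Set (UnitaryRep G)) (hKdisj : ∀ σ ∈ K, ¬ WeaklyContained μ σ πinf)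
    {σ : UnitaryRep G} (hσ : σ ∈ K) :
    ∃ (f : G → ℂ) (c : ℝ) (ξ : σ.carrier) (Fs : Set G) (ε : ℝ),
      Continuous f ∧ HasCompactSupport f ∧ IsCompact Fs ∧ 0 < ε ∧
      ‖πinf.op μ f‖ < c ∧
      σ ∈ fellBasicSet σ ξ Fs ε ∧
      ∀ σ' ∈ K, σ' ∈ fellBasicSet σ ξ Fs ε → c < ‖σ'.op μ f‖ := by
  classical
  have hK := hKdisj σ hσ
  rw [WeaklyContained] at hK
  push_neg at hK
  obtain ⟨f, hfc, hfs, hab⟩ := hK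
  set a := ‖πinf.op μ f‖ with ha_def
  set b := ‖σ.op μ f‖ with hb_def
  have ha0 : 0 ≤ a := norm_nonneg _
  have hab' : a < b := hab
  have hIntσ : Integrable (fun g => f g • σ.ρ g) μ := by
    by_contra h
    have h0 : σ.op μ f = 0 := MeasureTheory.integral_undef h
    rw [hb_def] at hab'
    rw [h0, norm_zero] at hab'
    exact absurd hab' (not_lt.2 ha0)
  set b' : ℝ := (a + b) / 2 with hb'_def
  set c : ℝ := (a + b') / 2 with hc_def
  have hb'pos : 0 < b' := by simp only [hb'_def]; linarith
  have hcpos : 0 < c := by simp only [hc_def]; linarith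
  have hac : a < c := by simp only [hc_def, hb'_def]; linarith
  have hcb' : c < b' := by simp only [hc_def, hb'_def]; linarith
  have hb'b : b' < b := by simp only [hb'_def]; linarith
  -- choose a unit vector almost attaining the norm
  have hx : ∃ x : σ.carrier, b' * ‖x‖ < ‖σ.op μ f x‖ := by
    by_contra h
    push_neg at h
    have := ContinuousLinearMap.opNorm_le_bound _ (le_of_lt hb'pos) h
    exact absurd this (not_le.2 hb'b)
  obtain ⟨x, hx⟩ := hx
  have hx0 : x ≠ 0 := by
    rintro rfl
    simp only [norm_zero, mul_zero, map_zero] at hx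
    exact absurd hx (lt_irrefl 0)
  have hxpos : 0 < ‖x‖ := norm_pos_iff.2 hx0
  set ξ : σ.carrier := ((‖x‖ : ℂ))⁻¹ • x with hξ_def
  have hξ1 : ‖ξ‖ = 1 := norm_smul_inv_norm (𝕜 := ℂ) hx0
  have hTξ : b' < ‖σ.op μ f ξ‖ := by
    have he : σ.op μ f ξ = ((‖x‖ : ℂ))⁻¹ • (σ.op μ f x) := by
      rw [hξ_def, _root_.map_smul]
    rw [he, norm_smul]
    have hn : ‖((‖x‖ : ℂ))⁻¹‖ = ‖x‖⁻¹ := by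
      rw [norm_inv, Complex.norm_real, Real.norm_eq_abs, abs_of_pos hxpos]
    rw [hn]
    nlinarith [hx, inv_pos.2 hxpos, mul_inv_cancel₀ (ne_of_gt hxpos), norm_nonneg (σ.op μ f x)]
  -- the L¹ norm of f
  set M : ℝ := ∫ g, ‖f g‖ ∂μ with hM_def
  have hMint : Integrable (fun g => ‖f g‖) μ :=
    hfc.norm.integrable_of_hasCompactSupport hfs.norm
  have hM0 : 0 ≤ M := integral_nonneg fun g => norm_nonneg _
  -- choice of ε
  set ε : ℝ := min (1/2) ((b'^2 - c^2) / (M^2 + c^2 + 1)) with hε_def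
  have hb'c : 0 < b'^2 - c^2 := by nlinarith
  have hden : (0:ℝ) < M^2 + c^2 + 1 := by positivity
  have hε : 0 < ε := lt_min (by norm_num) (div_pos hb'c hden)
  have hεhalf : ε ≤ 1/2 := min_le_left _ _
  have hεkey : ε * (M^2 + c^2) < b'^2 - c^2 := by
    have h1 : ε * (M^2 + c^2 + 1) ≤ b'^2 - c^2 := by
      have h2 : ε ≤ (b'^2 - c^2) / (M^2 + c^2 + 1) := min_le_right _ _
      calc ε * (M^2 + c^2 + 1) ≤ ((b'^2 - c^2) / (M^2 + c^2 + 1)) * (M^2 + c^2 + 1) :=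
            mul_le_mul_of_nonneg_right h2 (le_of_lt hden)
        _ = b'^2 - c^2 := div_mul_cancel₀ _ (ne_of_gt hden)
    nlinarith
  -- the compact set of group elements
  set S : Set G := tsupport f with hS_def
  have hScpt : IsCompact S := hfs
  set Fs : Set G := insert (1:G) ((fun p : G × G => p.1⁻¹ * p.2) '' (S ×ˢ S)) with hFs_def
  have hFscpt : IsCompact Fs := by
    apply IsCompact.insert
    exact (hScpt.prod hScpt).image ((continuous_fst.inv).mul continuous_snd)
  have h1F : (1:G) ∈ Fs := Set.mem_insert _ _
  have hmemF : ∀ t s : G, t ∈ S → s ∈ S → t⁻¹ * s ∈ Fs := by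
    intro t s ht hs
    exact Set.mem_insert_iff.2 (Or.inr ⟨(t, s), Set.mk_mem_prod ht hs, rfl⟩)
  refine ⟨f, c, ξ, Fs, ε, hfc, hfs, hFscpt, hε, hac, ?_, ?_⟩
  · exact ⟨ξ, fun g _ => by simpa using hε⟩
  · intro σ' hσ'K hσ'U
    obtain ⟨ξ', hξ'⟩ := hσ'U
    -- closeness of the matrix coefficients
    have hcoef : ∀ g ∈ Fs, ‖σ'.mcoef ξ' g - σ.mcoef ξ g‖ < ε := by
      intro g hg
      have heq : σ'.mcoef ξ' g - σ.mcoef ξ g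
          = (starRingEnd ℂ) ((inner (𝕜 := ℂ) (σ'.ρ g ξ') ξ') - (inner (𝕜 := ℂ) (σ.ρ g ξ) ξ)) := by
        rw [map_sub, UnitaryRep.mcoef, UnitaryRep.mcoef, inner_conj_symm, inner_conj_symm]
      rw [heq, RCLike.norm_conj]
      exact hξ' g hg
    -- bounds for the norm of ξ'
    have hξ'sq : |‖ξ'‖^2 - 1| < ε := by
      have h := hcoef 1 h1F
      have e1 : σ'.mcoef ξ' 1 = inner (𝕜 := ℂ) ξ' ξ' := by
        rw [UnitaryRep.mcoef, map_one, ContinuousLinearMap.one_apply]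
      have e2 : σ.mcoef ξ 1 = inner (𝕜 := ℂ) ξ ξ := by
        rw [UnitaryRep.mcoef, map_one, ContinuousLinearMap.one_apply]
      rw [e1, e2] at h
      have habs : |‖ξ'‖^2 - 1|
          = |RCLike.re ((inner (𝕜 := ℂ) ξ' ξ') - (inner (𝕜 := ℂ) ξ ξ))| := by
        rw [map_sub, inner_self_eq_norm_sq, inner_self_eq_norm_sq, hξ1, one_pow]
      rw [habs]
      exact lt_of_le_of_lt (RCLike.abs_re_le_norm _) h
    have hξ'ub : ‖ξ'‖^2 < 1 + ε := by
      rcases abs_lt.1 hξ'sq with ⟨_, h2⟩; linarith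
    have hξ'lb : (1:ℝ)/2 < ‖ξ'‖^2 := by
      rcases abs_lt.1 hξ'sq with ⟨h1, _⟩; linarith
    -- integrability for σ'
    have hK' := hKdisj σ' hσ'K
    rw [WeaklyContained] at hK'
    push_neg at hK'
    obtain ⟨f₀, hf₀c, hf₀s, hf₀lt⟩ := hK'
    have hop₀ : σ'.op μ f₀ ≠ 0 := by
      intro h0
      rw [h0, norm_zero] at hf₀lt
      exact absurd hf₀lt (not_lt.2 (norm_nonneg _))
    have hInt₀ : Integrable (fun g => f₀ g • σ'.ρ g) μ := by
      by_contra h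
      exact hop₀ (MeasureTheory.integral_undef h)
    have hne₀ : ∃ v, f₀ v ≠ 0 := by
      by_contra h
      push_neg at h
      apply hop₀
      have : (fun g => f₀ g • σ'.ρ g) = fun _ => (0 : σ'.carrier →L[ℂ] σ'.carrier) :=
        funext fun g => by rw [h g, zero_smul]
      show (∫ g, f₀ g • σ'.ρ g ∂μ) = 0
      rw [this]
      exact MeasureTheory.integral_zero _ _
    have hIntσ' : Integrable (fun g => f g • σ'.ρ g) μ :=
      σ'.integrable_smul_ρ μ hf₀c hInt₀ hne₀ hfc hfs
    -- the two vectors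
    set u : σ.carrier := σ.op μ f ξ with hu_def
    set u' : σ'.carrier := σ'.op μ f ξ' with hu'_def
    set gfun : G → ℂ := fun s => f s * inner (𝕜 := ℂ) u (σ.ρ s ξ) with hgfun_def
    set gfun' : G → ℂ := fun s => f s * inner (𝕜 := ℂ) u' (σ'.ρ s ξ') with hgfun'_def
    have hgcont : Continuous gfun :=
      hfc.mul (Continuous.inner continuous_const (σ.continuous_apply ξ))
    have hg'cont : Continuous gfun' :=
      hfc.mul (Continuous.inner continuous_const (σ'.continuous_apply ξ'))
    have hgsupp : HasCompactSupport gfun := hfs.mul_right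
    have hg'supp : HasCompactSupport gfun' := hfs.mul_right
    have hgint : Integrable gfun μ := hgcont.integrable_of_hasCompactSupport hgsupp
    have hg'int : Integrable gfun' μ := hg'cont.integrable_of_hasCompactSupport hg'supp
    have hE : inner (𝕜 := ℂ) u u = ∫ s, gfun s ∂μ := σ.inner_op_self' μ hIntσ ξ
    have hE' : inner (𝕜 := ℂ) u' u' = ∫ s, gfun' s ∂μ := σ'.inner_op_self' μ hIntσ' ξ'
    -- pointwise bound on the difference
    have hpt : ∀ s, ‖gfun' s - gfun s‖ ≤ ‖f s‖ * (M * ε) := by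
      intro s
      by_cases hfs0 : f s = 0
      · simp [hgfun_def, hgfun'_def, hfs0]
      · have hsS : s ∈ S := subset_tsupport f hfs0
        have e1 : inner (𝕜 := ℂ) u' (σ'.ρ s ξ')
            = ∫ t, (starRingEnd ℂ) (f t) * σ'.mcoef ξ' (t⁻¹ * s) ∂μ :=
          UnitaryRep.inner_op_ρ hIntσ' ξ' s
        have e2 : inner (𝕜 := ℂ) u (σ.ρ s ξ)
            = ∫ t, (starRingEnd ℂ) (f t) * σ.mcoef ξ (t⁻¹ * s) ∂μ :=
          UnitaryRep.inner_op_ρ hIntσ ξ s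
        have hi' : Integrable (fun t => (starRingEnd ℂ) (f t) * σ'.mcoef ξ' (t⁻¹ * s)) μ := by
          apply Continuous.integrable_of_hasCompactSupport
          · exact (RCLike.continuous_conj.comp hfc).mul
              ((σ'.continuous_mcoef ξ').comp (continuous_inv.mul continuous_const))
          · exact (hfs.comp_left (map_zero (starRingEnd ℂ))).mul_right
        have hi : Integrable (fun t => (starRingEnd ℂ) (f t) * σ.mcoef ξ (t⁻¹ * s)) μ := by
          apply Continuous.integrable_of_hasCompactSupport
          · exact (RCLike.continuous_conj.comp hfc).mul
              ((σ.continuous_mcoef ξ).comp (continuous_inv.mul continuous_const))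
          · exact (hfs.comp_left (map_zero (starRingEnd ℂ))).mul_right
        have hinner : ‖(∫ t, (starRingEnd ℂ) (f t) * σ'.mcoef ξ' (t⁻¹ * s) ∂μ)
            - ∫ t, (starRingEnd ℂ) (f t) * σ.mcoef ξ (t⁻¹ * s) ∂μ‖ ≤ M * ε := by
          rw [← MeasureTheory.integral_sub hi' hi]
          have hb : ∀ t, ‖(starRingEnd ℂ) (f t) * σ'.mcoef ξ' (t⁻¹ * s)
              - (starRingEnd ℂ) (f t) * σ.mcoef ξ (t⁻¹ * s)‖ ≤ ‖f t‖ * ε := by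
            intro t
            rw [← mul_sub, norm_mul, RCLike.norm_conj]
            by_cases hft : f t = 0
            · simp [hft]
            · have htS : t ∈ S := subset_tsupport f hft
              exact mul_le_mul_of_nonneg_left
                (le_of_lt (hcoef _ (hmemF t s htS hsS))) (norm_nonneg _)
          calc ‖∫ t, ((starRingEnd ℂ) (f t) * σ'.mcoef ξ' (t⁻¹ * s)
                - (starRingEnd ℂ) (f t) * σ.mcoef ξ (t⁻¹ * s)) ∂μ‖
              ≤ ∫ t, ‖f t‖ * ε ∂μ :=
                MeasureTheory.norm_integral_le_of_norm_le (hMint.mul_const ε)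
                  (MeasureTheory.ae_of_all _ hb)
            _ = M * ε := by rw [MeasureTheory.integral_mul_const]
        calc ‖gfun' s - gfun s‖ = ‖f s‖ * ‖inner (𝕜 := ℂ) u' (σ'.ρ s ξ')
              - inner (𝕜 := ℂ) u (σ.ρ s ξ)‖ := by
              rw [hgfun'_def, hgfun_def]
              simp only [← mul_sub, norm_mul]
          _ ≤ ‖f s‖ * (M * ε) := by
              rw [e1, e2]
              exact mul_le_mul_of_nonneg_left hinner (norm_nonneg _)
    -- integral bound
    have hEdiff : ‖(∫ s, gfun' s ∂μ) - ∫ s, gfun s ∂μ‖ ≤ M * (M * ε) := by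
      rw [← MeasureTheory.integral_sub hg'int hgint]
      calc ‖∫ s, (gfun' s - gfun s) ∂μ‖ ≤ ∫ s, ‖f s‖ * (M * ε) ∂μ :=
            MeasureTheory.norm_integral_le_of_norm_le (hMint.mul_const (M * ε))
              (MeasureTheory.ae_of_all _ hpt)
        _ = M * (M * ε) := by rw [MeasureTheory.integral_mul_const]
    -- pass to real norms
    have hr : |‖u'‖^2 - ‖u‖^2| ≤ M * (M * ε) := by
      have h9 : ‖inner (𝕜 := ℂ) u' u' - inner (𝕜 := ℂ) u u‖ ≤ M * (M * ε) := by
        rw [hE', hE]; exact hEdiff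
      have habs : |‖u'‖^2 - ‖u‖^2|
          = |RCLike.re ((inner (𝕜 := ℂ) u' u') - (inner (𝕜 := ℂ) u u))| := by
        rw [map_sub, inner_self_eq_norm_sq, inner_self_eq_norm_sq]
      rw [habs]
      exact le_trans (RCLike.abs_re_le_norm _) h9
    have hub : b' < ‖u‖ := hTξ
    have hop' : ‖u'‖ ≤ ‖σ'.op μ f‖ * ‖ξ'‖ := (σ'.op μ f).le_opNorm ξ'
    -- final numeric computation
    have hX0 : 0 ≤ ‖σ'.op μ f‖ := norm_nonneg _
    have hsq : ‖σ'.op μ f‖^2 * (1 + ε) > c^2 * (1 + ε) := by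
      have h10 : ‖u'‖^2 ≥ ‖u‖^2 - M * (M * ε) := by
        rcases abs_le.1 hr with ⟨h11, _⟩; linarith
      have h12 : ‖u‖^2 > b'^2 := by nlinarith
      have h13 : ‖u'‖^2 ≤ ‖σ'.op μ f‖^2 * ‖ξ'‖^2 := by nlinarith [norm_nonneg u', norm_nonneg ξ']
      nlinarith [sq_nonneg (‖σ'.op μ f‖)]
    have : ‖σ'.op μ f‖^2 > c^2 := by nlinarith
    nlinarith

set_option maxHeartbeats 400000


/-- if `π_i` strongly converge to `π_∞` and `K` is a Fell-compact set of
irreducible representations none of which is weakly contained in `π_∞` (i.e. `K` is a compact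
subset of the unitary dual disjoint from the support of `π_∞`), then eventually no element
of `K` is weakly contained in `π_i`. -/
theorem eventually_not_weakly_contained_of_strong_convergence
    [IsTopologicalGroup G] [LocallyCompactSpace G] [BorelSpace G]
    (μ : MeasureTheory.Measure G) [μ.IsHaarMeasure]
    (π : ℕ → UnitaryRep G) (πinf : UnitaryRep G)
    (hstrong : ∀ f : G → ℂ, Continuous f → HasCompactSupport f →
      Tendsto (fun i => ‖(π i).op μ f‖) atTop (nhds ‖πinf.op μ f‖))
    (K : Set (UnitaryRep G))
    (hKcpt : @IsCompact _ (fellTopology G) K)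
    (hKirr : ∀ σ ∈ K, σ.Irreducible)
    (hKdisj : ∀ σ ∈ K, ¬ WeaklyContained μ σ πinf) :
    ∃ i₀ : ℕ, ∀ i > i₀, ∀ σ ∈ K, ¬ WeaklyContained μ σ (π i) := by
  classical
  letI : TopologicalSpace (UnitaryRep G) := fellTopology G
  have hchoice : ∀ σ : K, ∃ (f : G → ℂ) (c : ℝ) (U : Set (UnitaryRep G)),
      Continuous f ∧ HasCompactSupport f ∧ ‖πinf.op μ f‖ < c ∧ IsOpen U ∧
      (σ : UnitaryRep G) ∈ U ∧ ∀ σ' ∈ K, σ' ∈ U → c < ‖σ'.op μ f‖ := by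
    rintro ⟨σ, hσ⟩
    obtain ⟨f, c, ξ, Fs, ε, hfc, hfs, hFscpt, hε, hlt, hmem, hball⟩ :=
      exists_good μ πinf K hKdisj hσ
    refine ⟨f, c, fellBasicSet σ ξ Fs ε, hfc, hfs, hlt, ?_, hmem, hball⟩
    exact TopologicalSpace.isOpen_generateFrom_of_mem ⟨σ, ξ, Fs, ε, hFscpt, hε, rfl⟩
  choose fσ cσ Uσ hfc hfs hlt hUopen hUmem hUball using hchoice
  have hcover : K ⊆ ⋃ σ : K, Uσ σ := fun σ' hσ' =>
    Set.mem_iUnion.2 ⟨⟨σ', hσ'⟩, hUmem _⟩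
  obtain ⟨T, hT⟩ := hKcpt.elim_finite_subcover Uσ hUopen hcover
  have hthr : ∀ j : K, ∃ N : ℕ, ∀ i ≥ N, ‖(π i).op μ (fσ j)‖ < cσ j := by
    intro j
    have hev := (hstrong (fσ j) (hfc j) (hfs j)).eventually_lt_const (hlt j)
    exact Filter.eventually_atTop.1 hev
  choose N hN using hthr
  refine ⟨T.sup N, ?_⟩
  intro i hi σ' hσ' hw
  obtain ⟨j, hjT, hj⟩ := Set.mem_iUnion₂.1 (hT hσ')
  have h1 : cσ j < ‖σ'.op μ (fσ j)‖ := hUball j σ' hσ' hj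
  have h2 : ‖σ'.op μ (fσ j)‖ ≤ ‖(π i).op μ (fσ j)‖ := hw (fσ j) (hfc j) (hfs j)
  have h3 : ‖(π i).op μ (fσ j)‖ < cσ j :=
    hN j i (le_trans (Finset.le_sup hjT) (le_of_lt hi))
  linarith

end
end
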